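/- arXiv:2112.07377 — 3 statements merged into one kernel-verified Lean document; each statement's English description precedes it below -/
import Mathlib

section
/- Let Γ → Δ be a sequent not derivable in NMVL_A from a set of sequents Σ. Then there exists a set of labelled formulas Γ* ⊇ Γ, maximal with the property that no finite subset Γ′ ⊆ Γ* yields a Σ-derivation of Γ′ → Δ, and this Γ* is complete: for every formula φ there is exactly one k ∈ {1,…,n} with (φ,k) ∈ Γ*. -/
/-- Formulas over a set `C` of connectives (applied to lists of arguments). -/
inductive Fm (C : Type) : Type
  | atom : ℕ → Fm C
  | app : C → List (Fm C) → Fm C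

noncomputable instance {C : Type} : DecidableEq (Fm C) := Classical.decEq _

/-- A sequent of finite sets of labelled formulas. -/
structure Sequent (C : Type) [DecidableEq C] (n : ℕ) where
  ant : Finset (Fm C × Fin n)
  suc : Finset (Fm C × Fin n)

variable {C : Type} [DecidableEq C] {n : ℕ}

/-- A valuation legal w.r.t. the non-deterministic tables `tbl`. -/
def IsVal (tbl : C → List (Fin n) → Finset (Fin n)) (v : Fm C → Fin n) : Prop :=
  ∀ c args, v (Fm.app c args) ∈ tbl c (args.map v)

/-- A valuation satisfies a sequent. -/
def Sat (v : Fm C → Fin n) (S : Sequent C n) : Prop :=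
  (∀ p ∈ S.ant, v p.1 = p.2) → ∃ p ∈ S.suc, v p.1 = p.2

/-- Semantic entailment. -/
def Entails (tbl : C → List (Fin n) → Finset (Fin n)) (H : Set (Sequent C n)) (S : Sequent C n) : Prop :=
  ∀ v : Fm C → Fin n, IsVal tbl v → (∀ T ∈ H, Sat v T) → Sat v S

/-- The family (∗(φ₁,…,φ_ℓ)×k)⁻¹ of antecedent sets. -/
def Theta (tbl : C → List (Fin n) → Finset (Fin n)) (c : C) (args : List (Fm C)) (k : Fin n) :
    Set (Finset (Fm C × Fin n)) :=
  { Θ | ∃ ks : List (Fin n), ks.length = args.length ∧ k ∈ tbl c ks ∧ Θ = (args.zip ks).toFinset }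

/-- Λ ∈ ⋁(∗(φ₁,…,φ_ℓ)×k)⁻¹ : a choice set hitting each Θ_q and contained in their union. -/
def Choice (tbl : C → List (Fin n) → Finset (Fin n)) (c : C) (args : List (Fm C)) (k : Fin n)
    (Λ : Finset (Fm C × Fin n)) : Prop :=
  (∀ Θ ∈ Theta tbl c args k, ∃ x ∈ Θ, x ∈ Λ) ∧
  (∀ x ∈ Λ, ∃ Θ ∈ Theta tbl c args k, x ∈ Θ)

/-- Which optional axioms/rules a calculus has. -/
structure Rules where
  tableAx : Bool      -- table axioms (2)
  tableRuleS : Bool   -- succedent table rules (10)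
  dualAx : Bool       -- distributively dual axioms (13)
  anteRule : Bool     -- antecedent introduction rules (17)
  multiShift : Bool   -- K-L-multi-shift (16)
  cut : Bool
  res : Bool

/-- Derivability from hypothesis sequents `H`; axioms (ψ,k)→(ψ,k), L-shift, R-shift and
weakenings are always present, the other axioms/rules are governed by `R`. -/
inductive Deriv (R : Rules) (tbl : C → List (Fin n) → Finset (Fin n)) (H : Set (Sequent C n)) :
    Sequent C n → Prop
  | hyp {S} : S ∈ H → Deriv R tbl H S
  | ax (ψ : Fm C) (k : Fin n) : Deriv R tbl H ⟨{(ψ, k)}, {(ψ, k)}⟩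
  | tableAx (c : C) (args : List (Fm C)) (ks : List (Fin n))
      (hlen : ks.length = args.length) (h : R.tableAx = true) :
      Deriv R tbl H ⟨(args.zip ks).toFinset, (tbl c ks).image (fun k => (Fm.app c args, k))⟩
  | lshift {Γ Δ} (φ : Fm C) (k : Fin n) :
      Deriv R tbl H ⟨insert (φ, k) Γ, Δ⟩ →
      Deriv R tbl H ⟨Γ, Δ ∪ ({k}ᶜ : Finset (Fin n)).image (fun k' => (φ, k'))⟩
  | rshift {Γ Δ} (φ : Fm C) {k' k'' : Fin n} (h : k' ≠ k'') :
      Deriv R tbl H ⟨Γ, insert (φ, k') Δ⟩ → Deriv R tbl H ⟨insert (φ, k'') Γ, Δ⟩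
  | lweak {Γ Δ} (φ : Fm C) (k : Fin n) :
      Deriv R tbl H ⟨Γ, Δ⟩ → Deriv R tbl H ⟨insert (φ, k) Γ, Δ⟩
  | rweak {Γ Δ} (φ : Fm C) (k : Fin n) :
      Deriv R tbl H ⟨Γ, Δ⟩ → Deriv R tbl H ⟨Γ, insert (φ, k) Δ⟩
  | cut {Γ Δ} (φ : Fm C) (k : Fin n) (h : R.cut = true) :
      Deriv R tbl H ⟨Γ, insert (φ, k) Δ⟩ → Deriv R tbl H ⟨insert (φ, k) Γ, Δ⟩ →
      Deriv R tbl H ⟨Γ, Δ⟩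
  | res {Γ Δ' Δ''} (φ : Fm C) {k' k'' : Fin n} (h : R.res = true) (hk : k' ≠ k'') :
      Deriv R tbl H ⟨Γ, insert (φ, k') Δ'⟩ → Deriv R tbl H ⟨Γ, insert (φ, k'') Δ''⟩ →
      Deriv R tbl H ⟨Γ, Δ' ∪ Δ''⟩
  | tableRuleS {Γ Δ} (c : C) (args : List (Fm C)) (ks : List (Fin n))
      (hlen : ks.length = args.length) (h : R.tableRuleS = true)
      (prem : ∀ p ∈ args.zip ks, Deriv R tbl H ⟨Γ, insert p Δ⟩) :
      Deriv R tbl H ⟨Γ, Δ ∪ (tbl c ks).image (fun k => (Fm.app c args, k))⟩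
  | dualAx (c : C) (args : List (Fm C)) (k : Fin n) (Λ : Finset (Fm C × Fin n))
      (h : R.dualAx = true) (hΛ : Choice tbl c args k Λ) :
      Deriv R tbl H ⟨{(Fm.app c args, k)}, Λ⟩
  | anteRule {Γ Δ} (c : C) (args : List (Fm C)) (k : Fin n) (h : R.anteRule = true)
      (prem : ∀ ks : List (Fin n), ks.length = args.length → k ∈ tbl c ks →
        Deriv R tbl H ⟨Γ ∪ (args.zip ks).toFinset, Δ⟩) :
      Deriv R tbl H ⟨insert (Fm.app c args, k) Γ, Δ⟩
  | multiShift {Γ Δ} (φ : Fm C) (K : Finset (Fin n)) (h : R.multiShift = true)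
      (hK : K ≠ Finset.univ)
      (prem : ∀ k ∈ K, Deriv R tbl H ⟨insert (φ, k) Γ, Δ⟩) :
      Deriv R tbl H ⟨Γ, Δ ∪ Kᶜ.image (fun k' => (φ, k'))⟩

/-- NMVL_A : table axioms, cut and resolution. -/
def NMVL_A : Rules := ⟨true, false, false, false, false, true, true⟩
/-- NMVL_A with cut but without resolution. -/
def NMVL_A_cut : Rules := ⟨true, false, false, false, false, true, false⟩
/-- NMVL_A with resolution but without cut. -/
def NMVL_A_res : Rules := ⟨true, false, false, false, false, false, true⟩
/-- NMVL_R : succedent table rules, cut and resolution. -/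
def NMVL_R : Rules := ⟨false, true, false, false, false, true, true⟩
/-- NMVL_R without cut and resolution. -/
def NMVL_R_cf : Rules := ⟨false, true, false, false, false, false, false⟩
/-- NMVL_A^dd : distributively dual axioms, cut and resolution. -/
def NMVL_Add : Rules := ⟨false, false, true, false, false, true, true⟩
/-- NMVL_R^sd : antecedent table rules, multi-shift, cut and resolution. -/
def NMVL_Rsd : Rules := ⟨false, false, false, true, true, true, true⟩

section Aux
variable (R : Rules) (tbl : C → List (Fin n) → Finset (Fin n)) (H : Set (Sequent C n))

lemma deriv_weakL {Γ Δ : Finset (Fm C × Fin n)} (h : Deriv R tbl H ⟨Γ, Δ⟩)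
    (S : Finset (Fm C × Fin n)) : Deriv R tbl H ⟨Γ ∪ S, Δ⟩ := by
  classical
  induction S using Finset.induction_on with
  | empty => simpa using h
  | insert _ _ hx ih =>
    rw [Finset.union_insert]
    exact Deriv.lweak _ _ ih

lemma deriv_weakR {Γ Δ : Finset (Fm C × Fin n)} (h : Deriv R tbl H ⟨Γ, Δ⟩)
    (S : Finset (Fm C × Fin n)) : Deriv R tbl H ⟨Γ, Δ ∪ S⟩ := by
  classical
  induction S using Finset.induction_on with
  | empty => simpa using h
  | insert _ _ hx ih =>
    rw [Finset.union_insert]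
    exact Deriv.rweak _ _ ih

lemma deriv_weak {Γ Δ Γ' Δ' : Finset (Fm C × Fin n)} (h : Deriv R tbl H ⟨Γ, Δ⟩)
    (h1 : Γ ⊆ Γ') (h2 : Δ ⊆ Δ') : Deriv R tbl H ⟨Γ', Δ'⟩ := by
  have := deriv_weakR R tbl H (deriv_weakL R tbl H h Γ') Δ'
  rwa [Finset.union_eq_right.mpr h1, Finset.union_eq_right.mpr h2] at this

/-- The sequent  → {φ} × univ  is derivable (needs n ≥ 1). -/
lemma deriv_univ [NeZero n] (φ : Fm C) :
    Deriv R tbl H ⟨∅, Finset.univ.image (fun k => (φ, k))⟩ := by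
  classical
  have k : Fin n := ⟨0, Nat.pos_of_ne_zero (NeZero.ne n)⟩
  have hax : Deriv R tbl H ⟨insert (φ, k) ∅, {(φ, k)}⟩ := by
    simpa using Deriv.ax φ k
  have := Deriv.lshift φ k hax
  have heq : ({(φ, k)} : Finset (Fm C × Fin n)) ∪
      ({k}ᶜ : Finset (Fin n)).image (fun k' => (φ, k')) =
      Finset.univ.image (fun k => (φ, k)) := by
    ext ⟨ψ, j⟩
    simp only [Finset.mem_union, Finset.mem_singleton, Finset.mem_image,
      Finset.mem_compl, Finset.mem_univ, true_and, Prod.mk.injEq]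
    by_cases hψ : ψ = φ <;> by_cases hj : j = k <;> simp [hψ, hj] <;> tauto
  rwa [heq] at this

/-- iterated cut -/
lemma deriv_cuts (φ : Fm C) {Γ Δ : Finset (Fm C × Fin n)} (K : Finset (Fin n))
    (hk : ∀ k ∈ K, Deriv NMVL_A tbl H ⟨insert (φ, k) Γ, Δ⟩)
    (hb : Deriv NMVL_A tbl H ⟨Γ, Δ ∪ K.image (fun k => (φ, k))⟩) :
    Deriv NMVL_A tbl H ⟨Γ, Δ⟩ := by
  classical
  induction K using Finset.induction_on with
  | empty => simpa using hb
  | @insert a K ha ih =>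
    apply ih (fun k hkK => hk k (Finset.mem_insert_of_mem hkK))
    rw [Finset.image_insert, Finset.union_insert] at hb
    exact Deriv.cut φ a rfl hb
      (deriv_weak _ tbl H (hk a (Finset.mem_insert_self a K)) (le_refl _)
        Finset.subset_union_left)

end Aux

/-- existence of a maximal complete extension of the antecedent of an
underivable sequent. -/
theorem stmt5 (hn : 2 ≤ n) (tbl : C → List (Fin n) → Finset (Fin n))
    (htbl : ∀ c ks, (tbl c ks).Nonempty) (H : Set (Sequent C n))
    (Γ Δ : Finset (Fm C × Fin n)) (hund : ¬ Deriv NMVL_A tbl H ⟨Γ, Δ⟩) :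
    ∃ G : Set (Fm C × Fin n), ↑Γ ⊆ G ∧
      (∀ Γ' : Finset (Fm C × Fin n), ↑Γ' ⊆ G → ¬ Deriv NMVL_A tbl H ⟨Γ', Δ⟩) ∧
      (∀ G' : Set (Fm C × Fin n), G ⊆ G' →
        (∀ Γ' : Finset (Fm C × Fin n), ↑Γ' ⊆ G' → ¬ Deriv NMVL_A tbl H ⟨Γ', Δ⟩) → G' = G) ∧
      (∀ φ : Fm C, ∃! k : Fin n, (φ, k) ∈ G) := by
  classical
  haveI : NeZero n := ⟨by omega⟩
  set P : Set (Set (Fm C × Fin n)) :=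
    { G | ∀ Γ' : Finset (Fm C × Fin n), ↑Γ' ⊆ G → ¬ Deriv NMVL_A tbl H ⟨Γ', Δ⟩ } with hP
  have hΓP : (↑Γ : Set (Fm C × Fin n)) ∈ P := by
    intro Γ' hsub hd
    exact hund (deriv_weak _ tbl H hd (by exact_mod_cast hsub) (le_refl _))
  obtain ⟨G, hΓG, hGmax⟩ := zorn_subset_nonempty P (fun c hcP hc hcne => by
    obtain ⟨s0, hs0⟩ := hcne
    refine ⟨⋃₀ c, ?_, fun s hs => Set.subset_sUnion_of_mem hs⟩
    intro Γ' hsub hd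
    have hss : ∃ s ∈ c, ↑Γ' ⊆ s := by
      clear hd
      induction Γ' using Finset.induction_on with
      | empty => exact ⟨s0, hs0, by simp⟩
      | @insert a T ha ih =>
        obtain ⟨s1, hs1, hT⟩ := ih (fun x hx => hsub (by
          simpa using Or.inr (Finset.mem_coe.mp hx)))
        have haU : a ∈ ⋃₀ c := hsub (by simp)
        obtain ⟨s2, hs2, ha2⟩ := haU
        rcases hc.total hs1 hs2 with h12 | h21
        · refine ⟨s2, hs2, fun x hx => ?_⟩
          rcases Finset.mem_insert.mp hx with rfl | hx
          · exact ha2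
          · exact h12 (hT hx)
        · refine ⟨s1, hs1, fun x hx => ?_⟩
          rcases Finset.mem_insert.mp hx with rfl | hx
          · exact h21 ha2
          · exact hT hx
    obtain ⟨s, hs, hΓ's⟩ := hss
    exact hcP hs Γ' hΓ's hd) ↑Γ hΓP
  refine ⟨G, hΓG, hGmax.1, fun G' hsub hG' => ((hGmax.2 hG' hsub).antisymm' hsub).symm, fun φ => ?_⟩
  have hex : ∃ k : Fin n, (φ, k) ∈ G := by
    by_contra hno
    push_neg at hno
    have hfail : ∀ k : Fin n, ∃ B : Finset (Fm C × Fin n), ↑B ⊆ G ∧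
        Deriv NMVL_A tbl H ⟨insert (φ, k) B, Δ⟩ := by
      intro k
      by_contra hkc
      push_neg at hkc
      have hmem : insert (φ, k) G ∈ P := by
        intro Γ' hsub hd
        refine hkc (Γ'.erase (φ, k)) ?_ ?_
        · intro x hx
          have hxe := Finset.mem_coe.mp hx
          have := hsub (Finset.mem_coe.mpr (Finset.mem_of_mem_erase hxe))
          rcases this with h | h
          · exact absurd h (Finset.mem_erase.mp hxe).1
          · exact h
        · refine deriv_weak _ tbl H hd (fun x hx => ?_) (le_refl _)
          by_cases hxk : x = (φ, k)
          · simp [hxk]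
          · exact Finset.mem_insert_of_mem (Finset.mem_erase.mpr ⟨hxk, hx⟩)
      have := hGmax.2 hmem (Set.subset_insert _ _)
      exact hno k (this (Set.mem_insert _ _))
    choose B hBG hBd using hfail
    set Γ'' : Finset (Fm C × Fin n) := Finset.univ.biUnion B with hΓ''
    have hΓ''G : ↑Γ'' ⊆ G := by
      intro x hx
      simp only [hΓ'', Finset.coe_biUnion, Set.mem_iUnion, Finset.mem_coe] at hx
      obtain ⟨k, _, hk⟩ := hx
      exact hBG k hk
    have hder : Deriv NMVL_A tbl H ⟨Γ'', Δ⟩ := by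
      apply deriv_cuts tbl H φ Finset.univ
      · intro k _
        exact deriv_weak _ tbl H (hBd k)
          (Finset.insert_subset_insert _ (fun x hx =>
            Finset.mem_biUnion.mpr ⟨k, Finset.mem_univ k, hx⟩)) (le_refl _)
      · exact deriv_weak _ tbl H (deriv_univ NMVL_A tbl H φ) (by simp)
          Finset.subset_union_right
    exact hGmax.1 Γ'' hΓ''G hder
  obtain ⟨k, hk⟩ := hex
  refine ⟨k, hk, fun k' hk' => ?_⟩
  by_contra hne
  have hax : Deriv NMVL_A tbl H ⟨{(φ, k)}, insert (φ, k) Δ⟩ :=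
    deriv_weak _ tbl H (Deriv.ax φ k) (le_refl _) (by simp)
  have hder : Deriv NMVL_A tbl H ⟨insert (φ, k') {(φ, k)}, Δ⟩ :=
    Deriv.rshift φ (fun h => hne h.symm) hax
  refine hGmax.1 (insert (φ, k') {(φ, k)}) ?_ hder
  intro x hx
  rcases Finset.mem_insert.mp (Finset.mem_coe.mp hx) with rfl | hx2
  · exact hk'
  · rw [Finset.mem_singleton] at hx2; subst hx2; exact hk
end

section
/- NMVL_R is sound and strongly complete: Σ ⊢_{NMVL_R} Γ → Δ if and only if every valuation satisfying all sequents in Σ satisfies Γ → Δ. -/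
variable {C : Type} [DecidableEq C] {n : ℕ}

section Aux

variable {C : Type} [DecidableEq C] {n : ℕ} {R : Rules}
  {tbl : C → List (Fin n) → Finset (Fin n)} {H : Set (Sequent C n)}

lemma zip_self_map (v : Fm C → Fin n) (args : List (Fm C)) :
    args.zip (args.map v) = args.map (fun a => (a, v a)) := by
  simpa using (List.zip_map' (f := id) (g := v) (l := args))

lemma map_eq_of_zip {v : Fm C → Fin n} : ∀ (args : List (Fm C)) (ks : List (Fin n)),
    ks.length = args.length → (∀ p ∈ args.zip ks, v p.1 = p.2) → args.map v = ks
  | [], ks, h, _ => by simpa using (List.length_eq_zero_iff.mp (by simpa using h)).symm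
  | a :: args, [], h, _ => by simp at h
  | a :: args, k :: ks, h, hz => by
    have h1 : v a = k := hz (a, k) (by simp [List.zip_cons_cons])
    have h2 : args.map v = ks :=
      map_eq_of_zip args ks (by simpa using h)
        (fun p hp => hz p (by simp [List.zip_cons_cons, hp]))
    simp [h1, h2]

lemma deriv_lunion (E : Finset (Fm C × Fin n)) {Γ Δ : Finset (Fm C × Fin n)}
    (d : Deriv R tbl H ⟨Γ, Δ⟩) : Deriv R tbl H ⟨Γ ∪ E, Δ⟩ := by
  induction E using Finset.induction_on with
  | empty => simpa using d
  | insert _ _ ha ih =>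
    rw [Finset.union_insert]
    exact Deriv.lweak _ _ ih

lemma deriv_runion (E : Finset (Fm C × Fin n)) {Γ Δ : Finset (Fm C × Fin n)}
    (d : Deriv R tbl H ⟨Γ, Δ⟩) : Deriv R tbl H ⟨Γ, Δ ∪ E⟩ := by
  induction E using Finset.induction_on with
  | empty => simpa using d
  | insert _ _ ha ih =>
    rw [Finset.union_insert]
    exact Deriv.rweak _ _ ih

lemma deriv_weaken {Γ₀ Δ₀ Γ Δ : Finset (Fm C × Fin n)} (hΓ : Γ₀ ⊆ Γ) (hΔ : Δ₀ ⊆ Δ)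
    (d : Deriv R tbl H ⟨Γ₀, Δ₀⟩) : Deriv R tbl H ⟨Γ, Δ⟩ := by
  have h1 : Deriv R tbl H ⟨Γ, Δ₀⟩ := by
    have := deriv_lunion Γ d
    rwa [Finset.union_eq_right.mpr hΓ] at this
  have := deriv_runion Δ h1
  rwa [Finset.union_eq_right.mpr hΔ] at this

lemma deriv_of_mem {Γ Δ : Finset (Fm C × Fin n)} (p : Fm C × Fin n)
    (h1 : p ∈ Γ) (h2 : p ∈ Δ) : Deriv R tbl H ⟨Γ, Δ⟩ := by
  refine deriv_weaken (Finset.singleton_subset_iff.mpr h1)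
    (Finset.singleton_subset_iff.mpr h2) ?_
  have := Deriv.ax (R := R) (tbl := tbl) (H := H) p.1 p.2
  simpa using this

/-- Move all succedent formulas to the antecedent, relabelled by `g`. -/
lemma deriv_shift_all (g : Fm C → Fin n) (Δt : Finset (Fm C × Fin n)) :
    ∀ (N : ℕ) (Δ' Γ' : Finset (Fm C × Fin n)), Δ'.card ≤ N →
    (∀ p ∈ Δ', g p.1 ≠ p.2) → Deriv R tbl H ⟨Γ', Δ'⟩ →
    Deriv R tbl H ⟨Γ' ∪ Δ'.image (fun p => (p.1, g p.1)), Δt⟩ := by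
  intro N
  induction N with
  | zero =>
    intro Δ' Γ' hcard _ d
    have hΔ : Δ' = ∅ := Finset.card_eq_zero.mp (Nat.le_zero.mp hcard)
    subst hΔ
    exact deriv_weaken (by simp) (Finset.empty_subset _) d
  | succ N ih =>
    intro Δ' Γ' hcard hg d
    rcases Finset.eq_empty_or_nonempty Δ' with hΔ | ⟨p, hp⟩
    · subst hΔ
      exact deriv_weaken (by simp) (Finset.empty_subset _) d
    · have hne : p.2 ≠ g p.1 := (hg p hp).symm
      have d1 : Deriv R tbl H ⟨Γ', insert (p.1, p.2) (Δ'.erase p)⟩ := by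
        rwa [show ((p.1, p.2) : Fm C × Fin n) = p from rfl, Finset.insert_erase hp]
      have d2 : Deriv R tbl H ⟨insert (p.1, g p.1) Γ', Δ'.erase p⟩ :=
        Deriv.rshift p.1 hne d1
      have d3 := ih (Δ'.erase p) (insert (p.1, g p.1) Γ')
        (by
          have := Finset.card_erase_of_mem hp
          omega)
        (fun q hq => hg q (Finset.mem_of_mem_erase hq)) d2
      refine deriv_weaken ?_ (le_refl _) d3
      intro x hx
      rcases Finset.mem_union.mp hx with hx | hx
      · rcases Finset.mem_insert.mp hx with hx | hx
        · subst hx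
          exact Finset.mem_union_right _ (Finset.mem_image.mpr ⟨p, hp, rfl⟩)
        · exact Finset.mem_union_left _ hx
      · rcases Finset.mem_image.mp hx with ⟨q, hq, hqe⟩
        exact Finset.mem_union_right _
          (Finset.mem_image.mpr ⟨q, Finset.mem_of_mem_erase hq, hqe⟩)

/-- Eliminate a block of labelled occurrences of `φ` from the succedent by cuts. -/
lemma deriv_elimK {Γ Δ : Finset (Fm C × Fin n)} (φ : Fm C) (K : Finset (Fin n))
    (hall : ∀ k ∈ K, Deriv NMVL_R tbl H ⟨insert (φ, k) Γ, Δ⟩)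
    (d : Deriv NMVL_R tbl H ⟨Γ, Δ ∪ K.image (fun k => (φ, k))⟩) :
    Deriv NMVL_R tbl H ⟨Γ, Δ⟩ := by
  induction K using Finset.induction_on with
  | empty => simpa using d
  | @insert a K ha ih =>
    have d1 : Deriv NMVL_R tbl H ⟨Γ, insert (φ, a) (Δ ∪ K.image (fun k => (φ, k)))⟩ := by
      have : Δ ∪ (insert a K).image (fun k => (φ, k))
          = insert (φ, a) (Δ ∪ K.image (fun k => (φ, k))) := by
        rw [Finset.image_insert, Finset.union_insert]
      rwa [this] at d
    have d2 : Deriv NMVL_R tbl H ⟨insert (φ, a) Γ, Δ ∪ K.image (fun k => (φ, k))⟩ :=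
      deriv_weaken (le_refl _) (Finset.subset_union_left)
        (hall a (Finset.mem_insert_self a K))
    exact ih (fun k hk => hall k (Finset.mem_insert_of_mem hk)) (Deriv.cut φ a rfl d1 d2)

lemma finset_subset_chain_mem {α : Type*} [DecidableEq α] {c : Set (Set α)} (hc : IsChain (· ⊆ ·) c)
    (hne : c.Nonempty) : ∀ Γ₀ : Finset α, ↑Γ₀ ⊆ ⋃₀ c → ∃ t ∈ c, ↑Γ₀ ⊆ t := by
  intro Γ₀
  induction Γ₀ using Finset.induction_on with
  | empty => exact fun _ => ⟨hne.choose, hne.choose_spec, by simp⟩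
  | @insert a Γ₀ ha ih =>
    intro hsub
    obtain ⟨t, htc, ht⟩ := ih (fun x hx => hsub (by simp [hx]))
    obtain ⟨s, hsc, hs⟩ := hsub (Finset.mem_coe.mpr (Finset.mem_insert_self a Γ₀))
    rcases eq_or_ne s t with h | h
    · exact ⟨t, htc, by
        intro x hx
        rcases Finset.mem_insert.mp hx with hx | hx
        · exact hx ▸ h ▸ hs
        · exact ht hx⟩
    rcases hc hsc htc h with h' | h'
    · exact ⟨t, htc, by
        intro x hx
        rcases Finset.mem_insert.mp hx with hx | hx
        · exact hx ▸ h' hs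
        · exact ht hx⟩
    · exact ⟨s, hsc, by
        intro x hx
        rcases Finset.mem_insert.mp hx with hx | hx
        · exact hx ▸ hs
        · exact h' (ht hx)⟩

/-- Soundness of all rules. -/
lemma deriv_sound : ∀ {S : Sequent C n}, Deriv R tbl H S → Entails tbl H S := by
  intro S d
  induction d with
  | hyp h => exact fun v hv hH => hH _ h
  | ax ψ k => exact fun v hv hH hant => ⟨(ψ, k), by simp, hant _ (by simp)⟩
  | @tableAx c args ks hlen h =>
    intro v hv hH hant
    have hmap : args.map v = ks :=
      map_eq_of_zip args ks hlen (fun p hp => hant p (List.mem_toFinset.mpr hp))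
    refine ⟨(Fm.app c args, v (Fm.app c args)), ?_, rfl⟩
    exact Finset.mem_image.mpr ⟨v (Fm.app c args), by rw [← hmap]; exact hv c args, rfl⟩
  | @lshift Γ Δ φ k d ih =>
    intro v hv hH hant
    by_cases hvφ : v φ = k
    · obtain ⟨p, hp, he⟩ := ih v hv hH (by
        intro p hp
        rcases Finset.mem_insert.mp hp with hp | hp
        · subst hp; exact hvφ
        · exact hant p hp)
      exact ⟨p, Finset.mem_union_left _ hp, he⟩
    · exact ⟨(φ, v φ), Finset.mem_union_right _
        (Finset.mem_image.mpr ⟨v φ, by simpa using hvφ, rfl⟩), rfl⟩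
  | @rshift Γ Δ φ k' k'' hne d ih =>
    intro v hv hH hant
    have hφ : v φ = k'' := hant (φ, k'') (Finset.mem_insert_self _ _)
    obtain ⟨p, hp, he⟩ := ih v hv hH (fun p hp => hant p (Finset.mem_insert_of_mem hp))
    rcases Finset.mem_insert.mp hp with hp | hp
    · subst hp; exact absurd (he.symm.trans hφ) hne
    · exact ⟨p, hp, he⟩
  | @lweak Γ Δ φ k d ih =>
    intro v hv hH hant
    exact ih v hv hH (fun p hp => hant p (Finset.mem_insert_of_mem hp))
  | @rweak Γ Δ φ k d ih =>
    intro v hv hH hant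
    obtain ⟨p, hp, he⟩ := ih v hv hH hant
    exact ⟨p, Finset.mem_insert_of_mem hp, he⟩
  | @cut Γ Δ φ k h d1 d2 ih1 ih2 =>
    intro v hv hH hant
    obtain ⟨p, hp, he⟩ := ih1 v hv hH hant
    rcases Finset.mem_insert.mp hp with hp | hp
    · subst hp
      exact ih2 v hv hH (by
        intro q hq
        rcases Finset.mem_insert.mp hq with hq | hq
        · subst hq; exact he
        · exact hant q hq)
    · exact ⟨p, hp, he⟩
  | @res Γ Δ' Δ'' φ k' k'' h hk d1 d2 ih1 ih2 =>
    intro v hv hH hant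
    obtain ⟨p, hp, he⟩ := ih1 v hv hH hant
    rcases Finset.mem_insert.mp hp with hp | hp
    · subst hp
      obtain ⟨q, hq, hqe⟩ := ih2 v hv hH hant
      rcases Finset.mem_insert.mp hq with hq | hq
      · subst hq; exact absurd (he.symm.trans hqe) hk
      · exact ⟨q, Finset.mem_union_right _ hq, hqe⟩
    · exact ⟨p, Finset.mem_union_left _ hp, he⟩
  | @tableRuleS Γ Δ c args ks hlen h prem ih =>
    intro v hv hH hant
    by_cases hd : ∃ p ∈ Δ, v p.1 = p.2
    · obtain ⟨p, hp, he⟩ := hd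
      exact ⟨p, Finset.mem_union_left _ hp, he⟩
    · have hz : ∀ p ∈ args.zip ks, v p.1 = p.2 := by
        intro p hp
        obtain ⟨q, hq, he⟩ := ih p hp v hv hH hant
        rcases Finset.mem_insert.mp hq with hq | hq
        · subst hq; exact he
        · exact absurd ⟨q, hq, he⟩ hd
      have hmap : args.map v = ks := map_eq_of_zip args ks hlen hz
      refine ⟨(Fm.app c args, v (Fm.app c args)), Finset.mem_union_right _ ?_, rfl⟩
      exact Finset.mem_image.mpr ⟨v (Fm.app c args), by rw [← hmap]; exact hv c args, rfl⟩
  | @dualAx c args k Λ h hΛ =>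
    intro v hv hH hant
    have hk : v (Fm.app c args) = k := hant (Fm.app c args, k) (by simp)
    have hθ : ((args.zip (args.map v)).toFinset : Finset (Fm C × Fin n))
        ∈ Theta tbl c args k :=
      ⟨args.map v, by simp, hk ▸ hv c args, rfl⟩
    obtain ⟨x, hxΘ, hxΛ⟩ := hΛ.1 _ hθ
    have hx : v x.1 = x.2 := by
      have := List.mem_toFinset.mp hxΘ
      rw [zip_self_map] at this
      obtain ⟨a, _, hae⟩ := List.mem_map.mp this
      rw [← hae]
    exact ⟨x, hxΛ, hx⟩
  | @anteRule Γ Δ c args k h prem ih =>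
    intro v hv hH hant
    have hk : v (Fm.app c args) = k := hant _ (Finset.mem_insert_self _ _)
    refine ih (args.map v) (by simp) (hk ▸ hv c args) v hv hH ?_
    intro p hp
    rcases Finset.mem_union.mp hp with hp | hp
    · exact hant p (Finset.mem_insert_of_mem hp)
    · have := List.mem_toFinset.mp hp
      rw [zip_self_map] at this
      obtain ⟨a, _, hae⟩ := List.mem_map.mp this
      rw [← hae]
  | @multiShift Γ Δ φ K h hK prem ih =>
    intro v hv hH hant
    by_cases hvφ : v φ ∈ K
    · obtain ⟨p, hp, he⟩ := ih (v φ) hvφ v hv hH (by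
        intro p hp
        rcases Finset.mem_insert.mp hp with hp | hp
        · subst hp; rfl
        · exact hant p hp)
      exact ⟨p, Finset.mem_union_left _ hp, he⟩
    · exact ⟨(φ, v φ), Finset.mem_union_right _
        (Finset.mem_image.mpr ⟨v φ, by simpa using hvφ, rfl⟩), rfl⟩

end Aux

/-- Consistency of a set of labelled formulas relative to target succedent `Δ`. -/
def IsCon (tbl : C → List (Fin n) → Finset (Fin n)) (H : Set (Sequent C n))
    (Δ : Finset (Fm C × Fin n)) (T : Set (Fm C × Fin n)) : Prop :=
  ∀ Γ₀ : Finset (Fm C × Fin n), ↑Γ₀ ⊆ T → ¬ Deriv NMVL_R tbl H ⟨Γ₀, Δ⟩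

lemma completeness {tbl : C → List (Fin n) → Finset (Fin n)} {H : Set (Sequent C n)}
    {S : Sequent C n} (hn : 2 ≤ n) (hent : Entails tbl H S) : Deriv NMVL_R tbl H S := by
  by_contra hnd
  have hConS : IsCon tbl H S.suc ↑S.ant := by
    intro Γ₀ hΓ₀ d
    exact hnd (deriv_weaken (Finset.coe_subset.mp hΓ₀) (le_refl _) d)
  obtain ⟨T, hsub, hmax⟩ := zorn_subset_nonempty {T | IsCon tbl H S.suc T}
    (by
      intro c hcS hchain hcne
      refine ⟨⋃₀ c, ?_, fun s hs => Set.subset_sUnion_of_mem hs⟩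
      intro Γ₀ hΓ₀ d
      obtain ⟨t, htc, ht⟩ := finset_subset_chain_mem hchain hcne Γ₀ hΓ₀
      exact hcS htc Γ₀ ht d)
    ↑S.ant hConS
  have hConT : IsCon tbl H S.suc T := hmax.1
  -- each formula has at most one label in T
  have huniq : ∀ (φ : Fm C) (k k' : Fin n), (φ, k) ∈ T → (φ, k') ∈ T → k = k' := by
    intro φ k k' hk hk'
    by_contra hne
    have d0 : Deriv NMVL_R tbl H (⟨{(φ, k)}, {(φ, k)}⟩ : Sequent C n) :=
      Deriv.ax (R := NMVL_R) (tbl := tbl) (H := H) φ k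
    have d1 := deriv_shift_all (R := NMVL_R) (tbl := tbl) (H := H)
      (fun _ => k') S.suc 1 {(φ, k)} {(φ, k)} (by simp)
      (by
        intro p hp
        simp only [Finset.mem_singleton] at hp
        subst hp
        exact fun h => hne h.symm) d0
    refine hConT _ ?_ d1
    intro x hx
    simp only [Finset.coe_union, Set.mem_union, Finset.mem_coe, Finset.mem_union,
      Finset.mem_image, Finset.mem_singleton] at hx
    rcases hx with hx | ⟨p, hp, hpe⟩
    · exact hx ▸ hk
    · subst hp; exact hpe ▸ hk'
  -- each formula has at least one label in T
  have hex : ∀ φ : Fm C, ∃ k, (φ, k) ∈ T := by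
    by_contra hcon
    push_neg at hcon
    obtain ⟨φ, hφ⟩ := hcon
    have hG : ∀ k : Fin n, ∃ Γ₀ : Finset (Fm C × Fin n),
        ↑Γ₀ ⊆ insert (φ, k) T ∧ Deriv NMVL_R tbl H ⟨Γ₀, S.suc⟩ := by
      intro k
      have hnc : ¬ IsCon tbl H S.suc (insert (φ, k) T) := by
        intro hc
        exact hφ k (hmax.2 hc (Set.subset_insert _ _) (Set.mem_insert _ _))
      rw [IsCon] at hnc
      push_neg at hnc
      obtain ⟨Γ₀, h1, h2⟩ := hnc
      exact ⟨Γ₀, h1, h2⟩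
    choose G hG1 hG2 using hG
    set Γ₀ : Finset (Fm C × Fin n) :=
      Finset.univ.biUnion (fun k : Fin n => (G k).erase (φ, k)) with hΓ₀def
    have hΓ₀T : ↑Γ₀ ⊆ T := by
      intro x hx
      simp only [hΓ₀def, Finset.coe_biUnion, Set.mem_iUnion, Finset.mem_coe,
        Finset.mem_erase] at hx
      obtain ⟨k, _, hxne, hxG⟩ := hx
      rcases Set.mem_insert_iff.mp (hG1 k hxG) with h | h
      · exact absurd h hxne
      · exact h
    have hall : ∀ k : Fin n, Deriv NMVL_R tbl H ⟨insert (φ, k) Γ₀, S.suc⟩ := by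
      intro k
      refine deriv_weaken ?_ (le_refl _) (hG2 k)
      rw [Finset.subset_insert_iff]
      exact Finset.subset_biUnion_of_mem (fun k : Fin n => (G k).erase (φ, k))
        (Finset.mem_univ k)
    have hk0 : 0 < n := by omega
    have dl : Deriv NMVL_R tbl H
        ⟨Γ₀, S.suc ∪ ({(⟨0, hk0⟩ : Fin n)}ᶜ : Finset (Fin n)).image (fun k' => (φ, k'))⟩ :=
      Deriv.lshift φ ⟨0, hk0⟩ (hall ⟨0, hk0⟩)
    exact hConT Γ₀ hΓ₀T (deriv_elimK φ ({(⟨0, hk0⟩ : Fin n)}ᶜ) (fun k _ => hall k) dl)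
  -- the canonical valuation
  let v : Fm C → Fin n := fun φ => (hex φ).choose
  have hvT : ∀ φ, (φ, v φ) ∈ T := fun φ => (hex φ).choose_spec
  have hvuniq : ∀ {φ : Fm C} {k : Fin n}, (φ, k) ∈ T → v φ = k :=
    fun {φ k} h => huniq φ (v φ) k (hvT φ) h
  have hTfalse : ∀ (Γ' Δ' : Finset (Fm C × Fin n)), ↑Γ' ⊆ T →
      Deriv NMVL_R tbl H ⟨Γ', Δ'⟩ → ∃ p ∈ Δ', v p.1 = p.2 := by
    intro Γ' Δ' hΓ' d
    by_contra hcon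
    push_neg at hcon
    have d1 := deriv_shift_all v S.suc Δ'.card Δ' Γ' (le_refl _) hcon d
    refine hConT _ ?_ d1
    intro x hx
    simp only [Finset.coe_union, Set.mem_union, Finset.mem_coe, Finset.mem_image] at hx
    rcases hx with hx | ⟨q, hq, hqe⟩
    · exact hΓ' hx
    · exact hqe ▸ hvT q.1
  -- v is a legal valuation
  have hval : IsVal tbl v := by
    intro c args
    set ks := args.map v with hks
    set Γ' : Finset (Fm C × Fin n) :=
      insert (Fm.app c args, v (Fm.app c args)) (args.zip ks).toFinset with hΓ'
    have hzT : ∀ p ∈ (args.zip ks).toFinset, (p : Fm C × Fin n) ∈ T := by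
      intro p hp
      have hm := List.mem_toFinset.mp hp
      rw [hks, zip_self_map] at hm
      obtain ⟨a, _, hae⟩ := List.mem_map.mp hm
      exact hae ▸ hvT a
    have hΓ'T : ↑Γ' ⊆ T := by
      intro x hx
      rcases Finset.mem_insert.mp (Finset.mem_coe.mp hx) with hx | hx
      · exact hx ▸ hvT (Fm.app c args)
      · exact hzT x hx
    have d0 : Deriv NMVL_R tbl H
        ⟨Γ', (∅ : Finset (Fm C × Fin n)) ∪ (tbl c ks).image (fun k => (Fm.app c args, k))⟩ :=
      Deriv.tableRuleS (Γ := Γ') (Δ := ∅) c args ks (by simp [hks]) rfl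
        (fun p hp => deriv_of_mem p (Finset.mem_insert_of_mem (List.mem_toFinset.mpr hp))
          (Finset.mem_insert_self _ _))
    obtain ⟨p, hp, he⟩ := hTfalse Γ' _ hΓ'T d0
    rcases Finset.mem_union.mp hp with hp | hp
    · simp at hp
    · obtain ⟨k', hk', hke⟩ := Finset.mem_image.mp hp
      rw [← hke] at he
      rw [he]
      exact hk'
  -- v satisfies the hypotheses
  have hHsat : ∀ T' ∈ H, Sat v T' := by
    intro S' hS' hant
    refine hTfalse S'.ant S'.suc ?_ (Deriv.hyp hS')
    intro p hp
    have h1 := hant p (Finset.mem_coe.mp hp)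
    have h2 := hvT p.1
    rw [h1] at h2
    exact h2
  -- v falsifies S, contradiction
  obtain ⟨p, hp, he⟩ := hent v hval hHsat (by
    intro p hp
    exact hvuniq (hsub (Finset.mem_coe.mpr hp)))
  refine hConT {p} ?_ (deriv_of_mem p (Finset.mem_singleton_self p) hp)
  intro x hx
  simp only [Finset.coe_singleton, Set.mem_singleton_iff] at hx
  subst hx
  have h2 := hvT x.1
  rw [he] at h2
  exact h2

/-- soundness and strong completeness of NMVL_R. -/
theorem stmt10 (hn : 2 ≤ n) (tbl : C → List (Fin n) → Finset (Fin n))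
    (htbl : ∀ c ks, (tbl c ks).Nonempty) (H : Set (Sequent C n)) (S : Sequent C n) :
    Deriv NMVL_R tbl H S ↔ Entails tbl H S :=
  ⟨fun d => deriv_sound d, completeness hn⟩
end

section
/- The calculus NMVL_A^dd, obtained from NMVL_A by replacing table axioms with the distributively dual axioms (∗(φ₁,…,φ_ℓ),k) → Λ for all Λ ∈ ⋁(∗(φ₁,…,φ_ℓ)×k)⁻¹, is sound and strongly complete: Σ ⊢_{NMVL_A^dd} S iff Σ ⊨ S. -/
variable {C : Type} [DecidableEq C] {n : ℕ}

section Aux13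

variable {R : Rules} {tbl : C → List (Fin n) → Finset (Fin n)} {H : Set (Sequent C n)}

lemma deriv_congr13 {A A' B B' : Finset (Fm C × Fin n)} (hA : A = A') (hB : B = B')
    (h : Deriv R tbl H ⟨A, B⟩) : Deriv R tbl H ⟨A', B'⟩ := hA ▸ hB ▸ h

lemma weakL13 {Γ Δ : Finset (Fm C × Fin n)} (E : Finset (Fm C × Fin n))
    (h : Deriv R tbl H ⟨Γ, Δ⟩) : Deriv R tbl H ⟨Γ ∪ E, Δ⟩ := by
  induction E using Finset.induction_on with
  | empty => simpa using h
  | @insert a E ha ih =>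
      exact deriv_congr13 (Finset.union_insert _ _ _).symm rfl (Deriv.lweak a.1 a.2 ih)

lemma weakR13 {Γ Δ : Finset (Fm C × Fin n)} (E : Finset (Fm C × Fin n))
    (h : Deriv R tbl H ⟨Γ, Δ⟩) : Deriv R tbl H ⟨Γ, Δ ∪ E⟩ := by
  induction E using Finset.induction_on with
  | empty => simpa using h
  | @insert a E ha ih =>
      exact deriv_congr13 rfl (Finset.union_insert _ _ _).symm (Deriv.rweak a.1 a.2 ih)

lemma weaken13 {Γ Γ' Δ Δ' : Finset (Fm C × Fin n)} (hΓ : Γ ⊆ Γ') (hΔ : Δ ⊆ Δ')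
    (h : Deriv R tbl H ⟨Γ, Δ⟩) : Deriv R tbl H ⟨Γ', Δ'⟩ :=
  deriv_congr13 (Finset.union_eq_right.2 hΓ) (Finset.union_eq_right.2 hΔ)
    (weakR13 Δ' (weakL13 Γ' h))

lemma pair_incon13 {φ : Fm C} {k k' : Fin n} (hk : k ≠ k') {Γ Δ : Finset (Fm C × Fin n)}
    (h1 : (φ, k) ∈ Γ) (h2 : (φ, k') ∈ Γ) : Deriv R tbl H ⟨Γ, Δ⟩ := by
  have hax : Deriv R tbl H ⟨{(φ, k)}, insert (φ, k) ∅⟩ := by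
    simpa using Deriv.ax (R := R) (tbl := tbl) (H := H) φ k
  have h3 : Deriv R tbl H ⟨insert (φ, k') {(φ, k)}, ∅⟩ := Deriv.rshift φ hk hax
  refine weaken13 ?_ (Finset.empty_subset _) h3
  intro x hx
  rcases Finset.mem_insert.1 hx with h | h
  · exact h ▸ h2
  · exact (Finset.mem_singleton.1 h) ▸ h1

lemma cut_finset13 {Γ Δ : Finset (Fm C × Fin n)} (φ : Fm C) (hc : R.cut = true)
    (K : Finset (Fin n)) :
    Deriv R tbl H ⟨Γ, Δ ∪ K.image (fun k => (φ, k))⟩ →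
    (∀ k ∈ K, Deriv R tbl H ⟨insert (φ, k) Γ, Δ⟩) →
    Deriv R tbl H ⟨Γ, Δ⟩ := by
  induction K using Finset.induction_on with
  | empty => intro h0 _; simpa using h0
  | @insert a K ha ih =>
      intro h0 h1
      refine ih ?_ (fun k hk => h1 k (Finset.mem_insert_of_mem hk))
      refine Deriv.cut φ a hc ?_ ?_
      · exact deriv_congr13 rfl (by rw [Finset.image_insert, Finset.union_insert]) h0
      · exact weakR13 _ (h1 a (Finset.mem_insert_self _ _))

lemma elim_all13 (hn : 0 < n) {Γ Δ : Finset (Fm C × Fin n)} (φ : Fm C) (hc : R.cut = true)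
    (h : ∀ k : Fin n, Deriv R tbl H ⟨insert (φ, k) Γ, Δ⟩) : Deriv R tbl H ⟨Γ, Δ⟩ := by
  have h0 := Deriv.lshift φ (⟨0, hn⟩ : Fin n) (h ⟨0, hn⟩)
  exact cut_finset13 φ hc _ h0 (fun k _ => h k)

lemma shift_all13 {v : Fm C → Fin n} (Λ : Finset (Fm C × Fin n)) :
    ∀ Γ Δ : Finset (Fm C × Fin n), (∀ x ∈ Λ, v x.1 ≠ x.2) →
    Deriv R tbl H ⟨Γ, Δ ∪ Λ⟩ →
    Deriv R tbl H ⟨Γ ∪ Λ.image (fun x => (x.1, v x.1)), Δ⟩ := by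
  induction Λ using Finset.induction_on with
  | empty => intro Γ Δ _ h; simpa using h
  | @insert x Λ hx ih =>
      intro Γ Δ hv h
      have h1 : Deriv R tbl H ⟨Γ, insert (x.1, x.2) (Δ ∪ Λ)⟩ :=
        deriv_congr13 rfl (by rw [Finset.union_insert]) h
      have h2 : Deriv R tbl H ⟨insert (x.1, v x.1) Γ, Δ ∪ Λ⟩ :=
        Deriv.rshift x.1 (fun e => hv x (Finset.mem_insert_self _ _) e.symm) h1
      have h3 := ih (insert (x.1, v x.1) Γ) Δ
        (fun y hy => hv y (Finset.mem_insert_of_mem hy)) h2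
      refine deriv_congr13 ?_ rfl h3
      rw [Finset.image_insert, Finset.union_insert, Finset.insert_union]

lemma mem_zip_pair13 {α β : Type*} {l : List α} {l' : List β} {x : α × β}
    (hx : x ∈ l.zip l') : ∃ i, ∃ h : i < l.length, ∃ h' : i < l'.length,
      x = (l[i], l'[i]) := by
  rw [List.mem_iff_getElem] at hx
  obtain ⟨i, hi, e⟩ := hx
  rw [List.length_zip, lt_min_iff] at hi
  refine ⟨i, hi.1, hi.2, ?_⟩
  rw [← e, List.getElem_zip]

lemma pair_mem_zip13 {α β : Type*} {l : List α} {l' : List β} {i : ℕ}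
    (h : i < l.length) (h' : i < l'.length) : (l[i], l'[i]) ∈ l.zip l' := by
  rw [List.mem_iff_getElem]
  exact ⟨i, by rw [List.length_zip]; exact lt_min h h', List.getElem_zip⟩

lemma sound13 {S : Sequent C n} (h : Deriv NMVL_Add tbl H S) : Entails tbl H S := by
  induction h with
  | hyp hS => exact fun v _ hH => hH _ hS
  | ax ψ k =>
      intro v _ _ ha
      exact ⟨(ψ, k), Finset.mem_singleton_self _, ha _ (Finset.mem_singleton_self _)⟩
  | tableAx c args ks hlen h => simp [NMVL_Add] at h
  | @lshift Γ Δ φ k hprem ih =>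
      intro v hv hH ha
      by_cases hk : v φ = k
      · obtain ⟨p, hp, e⟩ := ih v hv hH (by
          intro p hp
          rcases Finset.mem_insert.1 hp with h | h
          · subst h; exact hk
          · exact ha p h)
        exact ⟨p, Finset.mem_union_left _ hp, e⟩
      · refine ⟨(φ, v φ), Finset.mem_union_right _ ?_, rfl⟩
        exact Finset.mem_image.2 ⟨v φ, by simpa using hk, rfl⟩
  | @rshift Γ Δ φ k' k'' hne hprem ih =>
      intro v hv hH ha
      obtain ⟨p, hp, e⟩ := ih v hv hH (fun p hp => ha p (Finset.mem_insert_of_mem hp))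
      rcases Finset.mem_insert.1 hp with h | h
      · exfalso
        have e2 := ha (φ, k'') (Finset.mem_insert_self _ _)
        subst h
        exact hne (e.symm.trans e2)
      · exact ⟨p, h, e⟩
  | @lweak Γ Δ φ k hprem ih =>
      intro v hv hH ha
      exact ih v hv hH (fun p hp => ha p (Finset.mem_insert_of_mem hp))
  | @rweak Γ Δ φ k hprem ih =>
      intro v hv hH ha
      obtain ⟨p, hp, e⟩ := ih v hv hH ha
      exact ⟨p, Finset.mem_insert_of_mem hp, e⟩
  | @cut Γ Δ φ k hc h1 h2 ih1 ih2 =>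
      intro v hv hH ha
      obtain ⟨p, hp, e⟩ := ih1 v hv hH ha
      rcases Finset.mem_insert.1 hp with h | h
      · subst h
        exact ih2 v hv hH (by
          intro q hq
          rcases Finset.mem_insert.1 hq with h | h
          · subst h; exact e
          · exact ha q h)
      · exact ⟨p, h, e⟩
  | @res Γ Δ' Δ'' φ k' k'' hr hk h1 h2 ih1 ih2 =>
      intro v hv hH ha
      have hone : v φ ≠ k' ∨ v φ ≠ k'' := by
        by_cases e : v φ = k'
        · right; rw [e]; exact hk
        · left; exact e
      rcases hone with hne | hne
      · obtain ⟨p, hp, e⟩ := ih1 v hv hH ha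
        rcases Finset.mem_insert.1 hp with h | h
        · subst h; exact absurd e hne
        · exact ⟨p, Finset.mem_union_left _ h, e⟩
      · obtain ⟨p, hp, e⟩ := ih2 v hv hH ha
        rcases Finset.mem_insert.1 hp with h | h
        · subst h; exact absurd e hne
        · exact ⟨p, Finset.mem_union_right _ h, e⟩
  | tableRuleS c args ks hlen h prem ih => simp [NMVL_Add] at h
  | @dualAx c args k Λ h hΛ =>
      intro v hv hH ha
      have hk : v (Fm.app c args) = k := ha _ (Finset.mem_singleton_self _)
      have hΘ : (args.zip (args.map v)).toFinset ∈ Theta tbl c args k :=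
        ⟨args.map v, List.length_map _, hk ▸ hv c args, rfl⟩
      obtain ⟨x, hxΘ, hxΛ⟩ := hΛ.1 _ hΘ
      obtain ⟨i, hi, hi', e⟩ := mem_zip_pair13 (List.mem_toFinset.1 hxΘ)
      refine ⟨x, hxΛ, ?_⟩
      rw [e]
      simp
  | anteRule c args k h prem ih => simp [NMVL_Add] at h
  | multiShift φ K h hK prem ih => simp [NMVL_Add] at h

end Aux13

/-- soundness and strong completeness of NMVL_A^dd. -/
theorem stmt13 (hn : 2 ≤ n) (tbl : C → List (Fin n) → Finset (Fin n))
    (htbl : ∀ c ks, (tbl c ks).Nonempty) (H : Set (Sequent C n)) (S : Sequent C n) :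
    Deriv NMVL_Add tbl H S ↔ Entails tbl H S := by
  constructor
  · exact sound13
  · intro hE
    by_contra hnd
    have hn0 : 0 < n := by omega
    set Fam : Set (Set (Fm C × Fin n)) :=
      {M | ↑S.ant ⊆ M ∧ ∀ Γ₀ : Finset (Fm C × Fin n), ↑Γ₀ ⊆ M →
        ¬ Deriv NMVL_Add tbl H ⟨Γ₀, S.suc⟩} with hFam
    have hmem_Fam : ∀ M : Set (Fm C × Fin n), M ∈ Fam ↔
        (↑S.ant ⊆ M ∧ ∀ Γ₀ : Finset (Fm C × Fin n), ↑Γ₀ ⊆ M →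
          ¬ Deriv NMVL_Add tbl H ⟨Γ₀, S.suc⟩) := fun M => Iff.rfl
    have hSF : (↑S.ant : Set (Fm C × Fin n)) ∈ Fam := by
      rw [hmem_Fam]
      refine ⟨subset_rfl, fun Γ₀ hΓ₀ hd => hnd ?_⟩
      exact weaken13 (by exact_mod_cast hΓ₀) subset_rfl hd
    have hchain : ∀ c ⊆ Fam, IsChain (· ⊆ ·) c → c.Nonempty →
        ∃ ub ∈ Fam, ∀ s ∈ c, s ⊆ ub := by
      intro c hc hch hne
      refine ⟨⋃₀ c, (hmem_Fam _).2 ⟨?_, ?_⟩, fun s hs => Set.subset_sUnion_of_mem hs⟩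
      · obtain ⟨s, hs⟩ := hne
        exact ((hmem_Fam _).1 (hc hs)).1.trans (Set.subset_sUnion_of_mem hs)
      · intro Γ₀ hΓ₀ hd
        have : Nonempty c := hne.to_subtype
        have hdir : Directed (· ⊆ ·) (fun i : c => (i : Set (Fm C × Fin n))) :=
          hch.directed
        have hsub : ↑Γ₀ ⊆ ⋃ i : c, (i : Set (Fm C × Fin n)) := by
          rwa [← Set.sUnion_eq_iUnion]
        obtain ⟨i, hi⟩ := hdir.exists_mem_subset_of_finset_subset_biUnion hsub
        exact ((hmem_Fam _).1 (hc i.2)).2 Γ₀ hi hd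
    obtain ⟨M, hSM, hmax⟩ := zorn_subset_nonempty Fam hchain _ hSF
    have hConM : ∀ Γ₀ : Finset (Fm C × Fin n), ↑Γ₀ ⊆ M →
        ¬ Deriv NMVL_Add tbl H ⟨Γ₀, S.suc⟩ := ((hmem_Fam _).1 hmax.1).2
    -- every formula gets a value in M
    have hext : ∀ φ : Fm C, ∃ k, (φ, k) ∈ M := by
      intro φ
      by_contra hno
      have hstep : ∀ k : Fin n, ∃ Γ' : Finset (Fm C × Fin n),
          ↑Γ' ⊆ M ∧ Deriv NMVL_Add tbl H ⟨insert (φ, k) Γ', S.suc⟩ := by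
        intro k
        have hkin : insert (φ, k) M ∉ Fam ∨ (φ, k) ∈ M := by
          by_cases hmem : insert (φ, k) M ∈ Fam
          · right
            have := hmax.2 hmem (Set.subset_insert _ _)
            exact this (Set.mem_insert _ _)
          · left; exact hmem
        rcases hkin with hnf | hmem
        · rw [hmem_Fam] at hnf
          push_neg at hnf
          obtain ⟨Γ₀, hΓ₀, hd⟩ := hnf (hSM.trans (Set.subset_insert _ _))
          refine ⟨Γ₀.erase (φ, k), ?_, ?_⟩
          · intro x hx
            obtain ⟨hx1, hx2⟩ := Finset.mem_erase.1 (by exact_mod_cast hx)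
            rcases hΓ₀ (by exact_mod_cast hx2) with h | h
            · exact absurd h hx1
            · exact h
          · refine weaken13 ?_ subset_rfl hd
            intro x hx
            by_cases e : x = (φ, k)
            · exact e ▸ Finset.mem_insert_self _ _
            · exact Finset.mem_insert_of_mem (Finset.mem_erase.2 ⟨e, hx⟩)
        · exact absurd ⟨k, hmem⟩ hno
      choose g hg1 hg2 using hstep
      set Γ' : Finset (Fm C × Fin n) := Finset.univ.biUnion g with hΓ'
      have hd : Deriv NMVL_Add tbl H ⟨Γ', S.suc⟩ := by
        refine elim_all13 hn0 φ rfl (fun k => ?_)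
        refine weaken13 ?_ subset_rfl (hg2 k)
        exact Finset.insert_subset_insert _ (fun x hx =>
          Finset.mem_biUnion.2 ⟨k, Finset.mem_univ _, hx⟩)
      refine hConM Γ' ?_ hd
      intro x hx
      obtain ⟨k, _, hk⟩ := Finset.mem_biUnion.1 (by exact_mod_cast hx)
      exact hg1 k hk
    have huniq : ∀ (φ : Fm C) (k k' : Fin n), (φ, k) ∈ M → (φ, k') ∈ M → k = k' := by
      intro φ k k' h1 h2
      by_contra hne
      refine hConM {(φ, k), (φ, k')} ?_
        (pair_incon13 hne (Finset.mem_insert_self _ _)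
          (Finset.mem_insert_of_mem (Finset.mem_singleton_self _)))
      intro x hx
      rcases Finset.mem_insert.1 (by exact_mod_cast hx) with h | h
      · exact h ▸ h1
      · exact (Finset.mem_singleton.1 h) ▸ h2
    classical
    set v : Fm C → Fin n := fun φ => (hext φ).choose with hvdef
    have hv : ∀ φ, (φ, v φ) ∈ M := fun φ => (hext φ).choose_spec
    have hvm : ∀ φ k, (φ, k) ∈ M → v φ = k := fun φ k hk => huniq φ (v φ) k (hv φ) hk
    -- key refutation lemma
    have key : ∀ Γ Δ : Finset (Fm C × Fin n), ↑Γ ⊆ M → (∀ x ∈ Δ, v x.1 ≠ x.2) →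
        ¬ Deriv NMVL_Add tbl H ⟨Γ, Δ⟩ := by
      intro Γ Δ hΓ hΔ hd
      have h1 : Deriv NMVL_Add tbl H ⟨Γ, ∅ ∪ Δ⟩ := by simpa using hd
      have h2 := shift_all13 Δ Γ ∅ hΔ h1
      have h3 := weaken13 subset_rfl (Finset.empty_subset S.suc) h2
      refine hConM _ ?_ h3
      intro x hx
      rcases Finset.mem_union.1 (by exact_mod_cast hx) with h | h
      · exact hΓ (by exact_mod_cast h)
      · obtain ⟨y, _, e⟩ := Finset.mem_image.1 h
        exact e ▸ hv y.1
    -- v is a legal valuation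
    have hval : IsVal tbl v := by
      intro c args
      by_contra hk
      set L := args.length with hL
      set F : Finset (Fin L → Fin n) :=
        Finset.univ.filter (fun f => v (Fm.app c args) ∈ tbl c (List.ofFn f)) with hF
      have hpick : ∀ f ∈ F, ∃ x : Fm C × Fin n,
          x ∈ args.zip (List.ofFn f) ∧ x.2 ≠ v x.1 := by
        intro f hf
        by_contra hall
        push_neg at hall
        have heq : List.ofFn f = args.map v := by
          refine List.ext_getElem (by simp [hL]) ?_
          intro i hi1 hi2
          have hib : i < args.length := by simpa using hi2
          have hmem := pair_mem_zip13 (l := args) (l' := List.ofFn f) hib (by simpa [hL])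
          have := hall _ hmem
          simp only at this
          simp [this]
        have hfm := (Finset.mem_filter.1 hf).2
        rw [heq] at hfm
        exact hk hfm
      choose pick hp1 hp2 using hpick
      set Λ : Finset (Fm C × Fin n) := F.attach.image (fun f => pick f.1 f.2) with hΛdef
      have hΛ : Choice tbl c args (v (Fm.app c args)) Λ := by
        constructor
        · rintro Θ ⟨ks, hlen, hkks, rfl⟩
          have hksl : ks.length = L := hlen
          set f : Fin L → Fin n := fun i => ks[i.1]'(by omega) with hfdef
          have hofn : List.ofFn f = ks := by
            refine List.ext_getElem (by simp [hksl]) ?_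
            intro i hi1 hi2
            simp [hfdef]
          have hfF : f ∈ F := by
            rw [hF, Finset.mem_filter]
            exact ⟨Finset.mem_univ _, by rw [hofn]; exact hkks⟩
          refine ⟨pick f hfF, ?_, ?_⟩
          · rw [List.mem_toFinset, ← hofn]
            exact hp1 f hfF
          · exact Finset.mem_image.2 ⟨⟨f, hfF⟩, Finset.mem_attach _ _, rfl⟩
        · intro x hx
          obtain ⟨⟨f, hf⟩, _, e⟩ := Finset.mem_image.1 hx
          subst e
          refine ⟨(args.zip (List.ofFn f)).toFinset,
            ⟨List.ofFn f, by simp [hL], (Finset.mem_filter.1 hf).2, rfl⟩, ?_⟩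
          rw [List.mem_toFinset]
          exact hp1 f hf
      have hd := Deriv.dualAx (R := NMVL_Add) (tbl := tbl) (H := H)
        c args (v (Fm.app c args)) Λ rfl hΛ
      refine key _ _ ?_ ?_ hd
      · intro x hx
        have : x = (Fm.app c args, v (Fm.app c args)) := by
          simpa using (by exact_mod_cast hx : x ∈ ({(Fm.app c args, v (Fm.app c args))} :
            Finset (Fm C × Fin n)))
        exact this ▸ hv (Fm.app c args)
      · intro x hx
        obtain ⟨⟨f, hf⟩, _, e⟩ := Finset.mem_image.1 hx
        subst e
        exact fun h => hp2 f hf h.symm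
    -- v satisfies all hypotheses
    have hHsat : ∀ T ∈ H, Sat v T := by
      intro T hT ha
      by_contra hno
      push_neg at hno
      refine key T.ant T.suc ?_ hno (Deriv.hyp hT)
      intro x hx
      have hxa : x ∈ T.ant := by exact_mod_cast hx
      have := ha x hxa
      have : x = (x.1, v x.1) := by
        rw [this]
      exact this ▸ hv x.1
    -- v refutes S
    have hSa : ∀ p ∈ S.ant, v p.1 = p.2 := by
      intro p hp
      exact hvm p.1 p.2 (hSM (by exact_mod_cast hp))
    obtain ⟨p, hp, e⟩ := hE v hval hHsat hSa
    have hd : Deriv NMVL_Add tbl H ⟨{p}, S.suc⟩ := by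
      have hax : Deriv NMVL_Add tbl H ⟨{(p.1, p.2)}, {(p.1, p.2)}⟩ :=
        Deriv.ax p.1 p.2
      refine weaken13 subset_rfl ?_ hax
      intro x hx
      rw [Finset.mem_singleton.1 hx]
      exact hp
    refine hConM {p} ?_ hd
    intro x hx
    have : x = p := by exact_mod_cast Finset.mem_singleton.1 (by exact_mod_cast hx)
    subst this
    have : x = (x.1, v x.1) := by rw [e]
    exact this ▸ hv x.1
end
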